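/- Define, for C² functions, g(v, vᵢ, vⱼ) := vᵢ + vⱼ − v + (vᵢ' − vⱼ')/(vᵢ − vⱼ). Let v, v₁, v₂, v₃ : ℝ → ℝ be C² functions such that v₁ ≠ v₂, v₁ ≠ v₃, v₂ ≠ v₃ everywhere, and, with v_{ij} := g(v, vᵢ, vⱼ), also v₁₂ ≠ v₁₃, v₁₂ ≠ v₂₃, v₁₃ ≠ v₂₃ everywhere. Then the three functions g(v₁, g(v,v₁,v₂), g(v,v₁,v₃)), g(v₂, g(v,v₁,v₂), g(v,v₂,v₃)) and g(v₃, g(v,v₁,v₃), g(v,v₂,v₃)) coincide. -/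

import Mathlib

/-- The tangential map in additive potential form, equation (TTv') of the paper:
`g(v, vᵢ, vⱼ) = vᵢ + vⱼ − v + (vᵢ' − vⱼ')/(vᵢ − vⱼ)`. -/
noncomputable def tangMap' (v vi vj : ℝ → ℝ) : ℝ → ℝ :=
  fun t => vi t + vj t - v t + (deriv vi t - deriv vj t) / (vi t - vj t)

lemma tangMap'_symm (v a b : ℝ → ℝ) : tangMap' v a b = tangMap' v b a := by
  funext t
  simp only [tangMap']
  rw [← neg_sub (deriv b t), ← neg_sub (b t), neg_div_neg_eq]
  ring

lemma deriv_tangMap' (v vi vj : ℝ → ℝ)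
    (hv : ContDiff ℝ 2 v) (hvi : ContDiff ℝ 2 vi) (hvj : ContDiff ℝ 2 vj)
    (t : ℝ) (hne : vi t - vj t ≠ 0) :
    deriv (tangMap' v vi vj) t =
      deriv vi t + deriv vj t - deriv v t +
        ((deriv (deriv vi) t - deriv (deriv vj) t) * (vi t - vj t)
          - (deriv vi t - deriv vj t) * (deriv vi t - deriv vj t)) / (vi t - vj t) ^ 2 := by
  have Dv : Differentiable ℝ v := hv.differentiable (by norm_num)
  have Dvi : Differentiable ℝ vi := hvi.differentiable (by norm_num)
  have Dvj : Differentiable ℝ vj := hvj.differentiable (by norm_num)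
  have Ddvi : Differentiable ℝ (deriv vi) :=
    ((contDiff_succ_iff_deriv.mp (show ContDiff ℝ ((1:ℕ)+1) vi by exact_mod_cast hvi)).2.2).differentiable (by norm_num)
  have Ddvj : Differentiable ℝ (deriv vj) :=
    ((contDiff_succ_iff_deriv.mp (show ContDiff ℝ ((1:ℕ)+1) vj by exact_mod_cast hvj)).2.2).differentiable (by norm_num)
  have h1 : HasDerivAt (fun s => vi s + vj s - v s)
      (deriv vi t + deriv vj t - deriv v t) t :=
    (((Dvi t).hasDerivAt.add (Dvj t).hasDerivAt)).sub (Dv t).hasDerivAt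
  have hq : HasDerivAt (fun s => (deriv vi s - deriv vj s) / (vi s - vj s))
      (((deriv (deriv vi) t - deriv (deriv vj) t) * (vi t - vj t)
        - (deriv vi t - deriv vj t) * (deriv vi t - deriv vj t)) / (vi t - vj t) ^ 2) t :=
    ((Ddvi t).hasDerivAt.sub (Ddvj t).hasDerivAt).div
      ((Dvi t).hasDerivAt.sub (Dvj t).hasDerivAt) hne
  exact (h1.add hq).deriv

lemma tangMap'_alg (V V1 A B C A1 B1 C1 P Q R S T U : ℝ)
    (nbc : B - C ≠ 0)
    (nd1 : B - C + P - Q ≠ 0) (nd2 : A - C + P - R ≠ 0)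
    (hP : A1 - B1 = P * (A - B)) (hQ : A1 - C1 = Q * (A - C)) (hR : B1 - C1 = R * (B - C))
    (hS : S * (A - B) - T * (A - C) + U * (B - C) = 0) :
    (A + B - V + P) + (A + C - V + Q) - A
        + ((A1 + B1 - V1 + (S - P * P)) - (A1 + C1 - V1 + (T - Q * Q)))
          / ((A + B - V + P) - (A + C - V + Q))
      = (A + B - V + P) + (B + C - V + R) - B
        + ((A1 + B1 - V1 + (S - P * P)) - (B1 + C1 - V1 + (U - R * R)))
          / ((A + B - V + P) - (B + C - V + R)) := by
  have ed1 : (A + B - V + P) - (A + C - V + Q) = B - C + P - Q := by ring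
  have ed2 : (A + B - V + P) - (B + C - V + R) = A - C + P - R := by ring
  rw [ed1, ed2]
  have key : ((A1 + B1 - V1 + (S - P * P)) - (A1 + C1 - V1 + (T - Q * Q))) / (B - C + P - Q)
      - ((A1 + B1 - V1 + (S - P * P)) - (B1 + C1 - V1 + (U - R * R))) / (A - C + P - R)
      = R - Q := by
    rw [div_sub_div _ _ nd1 nd2, div_eq_iff (mul_ne_zero nd1 nd2)]
    apply mul_right_cancel₀ nbc
    linear_combination
        (-2*A1 + 2*B1 + S - T + 2*A*Q + B*P + B*Q - B*R - C*P - 3*C*Q + C*R) * hP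
      + (2*A1 - 3*B1 + C1 - S + T - 2*A*P - B*B + 2*B*C - C*C + 2*C*P) * hQ
      + (-A1 + 2*B1 - C1 + S - T + A*B - A*C + 2*A*P - A*Q - B*C + B*Q + C*C - 2*C*P) * hR
      + (B - C + P - Q) * hS
  linarith [key]

lemma tangMap'_key (v a b c : ℝ → ℝ)
    (hv : ContDiff ℝ 2 v) (ha : ContDiff ℝ 2 a) (hb : ContDiff ℝ 2 b) (hc : ContDiff ℝ 2 c)
    (t : ℝ) (hab : a t ≠ b t) (hac : a t ≠ c t) (hbc : b t ≠ c t)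
    (hL : tangMap' v a b t ≠ tangMap' v a c t)
    (hR : tangMap' v a b t ≠ tangMap' v b c t) :
    tangMap' a (tangMap' v a b) (tangMap' v a c) t
      = tangMap' b (tangMap' v a b) (tangMap' v b c) t := by
  have nab := sub_ne_zero.mpr hab
  have nac := sub_ne_zero.mpr hac
  have nbc := sub_ne_zero.mpr hbc
  have e1 := deriv_tangMap' v a b hv ha hb t nab
  have e2 := deriv_tangMap' v a c hv ha hc t nac
  have e3 := deriv_tangMap' v b c hv hb hc t nbc
  have q1 : ((deriv (deriv a) t - deriv (deriv b) t) * (a t - b t)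
        - (deriv a t - deriv b t) * (deriv a t - deriv b t)) / (a t - b t) ^ 2
      = (deriv (deriv a) t - deriv (deriv b) t) / (a t - b t)
        - ((deriv a t - deriv b t) / (a t - b t)) * ((deriv a t - deriv b t) / (a t - b t)) := by
    field_simp
  have q2 : ((deriv (deriv a) t - deriv (deriv c) t) * (a t - c t)
        - (deriv a t - deriv c t) * (deriv a t - deriv c t)) / (a t - c t) ^ 2
      = (deriv (deriv a) t - deriv (deriv c) t) / (a t - c t)
        - ((deriv a t - deriv c t) / (a t - c t)) * ((deriv a t - deriv c t) / (a t - c t)) := by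
    field_simp
  have q3 : ((deriv (deriv b) t - deriv (deriv c) t) * (b t - c t)
        - (deriv b t - deriv c t) * (deriv b t - deriv c t)) / (b t - c t) ^ 2
      = (deriv (deriv b) t - deriv (deriv c) t) / (b t - c t)
        - ((deriv b t - deriv c t) / (b t - c t)) * ((deriv b t - deriv c t) / (b t - c t)) := by
    field_simp
  simp only [tangMap'] at e1 e2 e3 hL hR ⊢
  rw [e1, e2, e3, q1, q2, q3]
  have hP : deriv a t - deriv b t
      = (deriv a t - deriv b t) / (a t - b t) * (a t - b t) := (div_mul_cancel₀ _ nab).symm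
  have hQ : deriv a t - deriv c t
      = (deriv a t - deriv c t) / (a t - c t) * (a t - c t) := (div_mul_cancel₀ _ nac).symm
  have hRr : deriv b t - deriv c t
      = (deriv b t - deriv c t) / (b t - c t) * (b t - c t) := (div_mul_cancel₀ _ nbc).symm
  have hS : (deriv (deriv a) t - deriv (deriv b) t) / (a t - b t) * (a t - b t)
      - (deriv (deriv a) t - deriv (deriv c) t) / (a t - c t) * (a t - c t)
      + (deriv (deriv b) t - deriv (deriv c) t) / (b t - c t) * (b t - c t) = 0 := by
    rw [div_mul_cancel₀ _ nab, div_mul_cancel₀ _ nac, div_mul_cancel₀ _ nbc]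
    ring
  have nd1 : b t - c t + (deriv a t - deriv b t) / (a t - b t)
      - (deriv a t - deriv c t) / (a t - c t) ≠ 0 := by
    intro h0
    exact sub_ne_zero.mpr hL (by linear_combination h0)
  have nd2 : a t - c t + (deriv a t - deriv b t) / (a t - b t)
      - (deriv b t - deriv c t) / (b t - c t) ≠ 0 := by
    intro h0
    exact sub_ne_zero.mpr hR (by linear_combination h0)
  linear_combination tangMap'_alg (v t) (deriv v t) (a t) (b t) (c t)
    (deriv a t) (deriv b t) (deriv c t)
    ((deriv a t - deriv b t) / (a t - b t))
    ((deriv a t - deriv c t) / (a t - c t))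
    ((deriv b t - deriv c t) / (b t - c t))
    ((deriv (deriv a) t - deriv (deriv b) t) / (a t - b t))
    ((deriv (deriv a) t - deriv (deriv c) t) / (a t - c t))
    ((deriv (deriv b) t - deriv (deriv c) t) / (b t - c t))
    nbc nd1 nd2 hP hQ hRr hS

/-- 3D-consistency of the map (TTv'). -/
theorem tangMap'_3D_consistency
    (v v1 v2 v3 : ℝ → ℝ)
    (hv : ContDiff ℝ 2 v) (hv1 : ContDiff ℝ 2 v1)
    (hv2 : ContDiff ℝ 2 v2) (hv3 : ContDiff ℝ 2 v3)
    (h12 : ∀ t, v1 t ≠ v2 t) (h13 : ∀ t, v1 t ≠ v3 t) (h23 : ∀ t, v2 t ≠ v3 t)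
    (h1213 : ∀ t, tangMap' v v1 v2 t ≠ tangMap' v v1 v3 t)
    (h1223 : ∀ t, tangMap' v v1 v2 t ≠ tangMap' v v2 v3 t)
    (h1323 : ∀ t, tangMap' v v1 v3 t ≠ tangMap' v v2 v3 t) :
    tangMap' v1 (tangMap' v v1 v2) (tangMap' v v1 v3)
      = tangMap' v2 (tangMap' v v1 v2) (tangMap' v v2 v3) ∧
    tangMap' v2 (tangMap' v v1 v2) (tangMap' v v2 v3)
      = tangMap' v3 (tangMap' v v1 v3) (tangMap' v v2 v3) := by
  constructor
  · funext t
    exact tangMap'_key v v1 v2 v3 hv hv1 hv2 hv3 t (h12 t) (h13 t) (h23 t)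
      (h1213 t) (h1223 t)
  · funext t
    have key := tangMap'_key v v2 v3 v1 hv hv2 hv3 hv1 t (h23 t) ((h12 t).symm)
      ((h13 t).symm)
      (by rw [tangMap'_symm v v2 v1]; exact (h1223 t).symm)
      (by rw [tangMap'_symm v v3 v1]; exact (h1323 t).symm)
    rw [tangMap'_symm v v2 v1, tangMap'_symm v v3 v1,
      tangMap'_symm v2 (tangMap' v v2 v3) (tangMap' v v1 v2),
      tangMap'_symm v3 (tangMap' v v2 v3) (tangMap' v v1 v3)] at key
    exact key
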